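/- Let p₀ and p₁ be probability mass functions on a finite set V, f ∈ (0,1), q(c) = f·p₁(c) + (1−f)·p₀(c), and posterior g(c) = f·p₁(c)/q(c). Then equality ∑_{c} p₁(c)·g(c) = f holds if and only if p₁(c) = q(c) for all c with q(c) > 0; in particular, if p₀ = p₁ then the expected posterior under p₁ equals the prior f. -/
import Mathlib


open Finset

/-- Equality case: the expected posterior under `p₁` equals the prior `f` iff
`p₁ c = q c` for all `c` with `q c > 0`; in particular, if `p₀ = p₁` then the
expected posterior under `p₁` equals `f`. -/
theorem expected_posterior_eq_prior_iff {V : Type*} [Fintype V] (p₀ p₁ : V → ℝ) (f : ℝ)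
    (hp₀0 : ∀ c, 0 ≤ p₀ c) (hp₁0 : ∀ c, 0 ≤ p₁ c)
    (hp₀1 : ∑ c, p₀ c = 1) (hp₁1 : ∑ c, p₁ c = 1)
    (hf0 : 0 < f) (hf1 : f < 1)
    (q g : V → ℝ) (hq : ∀ c, q c = f * p₁ c + (1 - f) * p₀ c)
    (hg : ∀ c, g c = f * p₁ c / q c) :
    ((∑ c, p₁ c * g c = f) ↔ (∀ c, 0 < q c → p₁ c = q c)) ∧
      (p₀ = p₁ → ∑ c, p₁ c * g c = f) := by
  have hq0 : ∀ c, 0 ≤ q c := by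
    intro c
    have h0 := hp₀0 c; have h1 := hp₁0 c
    rw [hq]; nlinarith
  have hqz : ∀ c, q c = 0 → p₁ c = 0 := by
    intro c h
    have h0 := hp₀0 c; have h1 := hp₁0 c
    rw [hq] at h; nlinarith
  have hsumq : ∑ c, q c = 1 := by
    simp only [hq]
    rw [Finset.sum_add_distrib, ← Finset.mul_sum, ← Finset.mul_sum, hp₀1, hp₁1]
    ring
  -- termwise identity
  have hterm : ∀ c, f * (p₁ c - q c) ^ 2 / q c = p₁ c * g c - 2 * f * p₁ c + f * q c := by
    intro c
    by_cases h : q c = 0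
    · have hp1 : p₁ c = 0 := hqz c h
      rw [hg, h, hp1]; simp
    · rw [hg]; field_simp; ring
  have hsum : ∑ c, f * (p₁ c - q c) ^ 2 / q c = ∑ c, p₁ c * g c - f := by
    rw [Finset.sum_congr rfl (fun c _ => hterm c)]
    rw [Finset.sum_add_distrib, Finset.sum_sub_distrib, ← Finset.mul_sum, ← Finset.mul_sum,
      hp₁1, hsumq]
    ring
  have hnn : ∀ c ∈ Finset.univ (α := V), 0 ≤ f * (p₁ c - q c) ^ 2 / q c := by
    intro c _
    have := hq0 c
    positivity
  have hiff : (∑ c, p₁ c * g c = f) ↔ (∀ c, 0 < q c → p₁ c = q c) := by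
    constructor
    · intro h c hc
      have hz : ∑ c, f * (p₁ c - q c) ^ 2 / q c = 0 := by rw [hsum, h]; ring
      have := (Finset.sum_eq_zero_iff_of_nonneg hnn).mp hz c (Finset.mem_univ c)
      have h2 : (p₁ c - q c) ^ 2 = 0 := by
        by_contra h2
        have : f * (p₁ c - q c) ^ 2 / q c > 0 := by
          apply div_pos
          · exact mul_pos hf0 (lt_of_le_of_ne (sq_nonneg _) (Ne.symm h2))
          · exact hc
        linarith
      have := pow_eq_zero_iff (n := 2) (by norm_num) |>.mp h2
      linarith
    · intro h
      have hz : ∀ c ∈ Finset.univ (α := V), f * (p₁ c - q c) ^ 2 / q c = 0 := by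
        intro c _
        rcases eq_or_lt_of_le (hq0 c) with hc | hc
        · rw [← hc]; simp
        · rw [h c hc]; simp
      have := Finset.sum_eq_zero hz
      rw [this] at hsum
      linarith
  refine ⟨hiff, fun hpp => hiff.mpr ?_⟩
  intro c _
  rw [hq, hpp]; ring
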